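/- Let (X, r) be a non-degenerate involutive set-theoretic solution of the Yang–Baxter equation with |X| = m ≥ 2, and let λ = (λ_1, …, λ_k) ∈ P(n, m) have λ_i = λ_{i+1} = l > 0 for some 1 ≤ i ≤ k−1. Let x = Ψ_{λ_1}(a_1) Ψ_{λ_2}(a_2) ⋯ Ψ_{λ_k}(a_k) be a λ-element, and let x′ be the word obtained from x by replacing the two consecutive blocks Ψ_l(a_i) Ψ_l(a_{i+1}) by Ψ_{−l}(σ_{Ψ_l(a_i)}(D^{l−1}(a_{i+1}))) Ψ_l(τ_{Ψ_l(a_{i+1})}(a_i)). Then x′ is again a λ-element and x′ ∈ O(x). -/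

import Mathlib

/-! Set-theoretic solutions of the Yang–Baxter equation.
For `r : X × X → X × X` we write `r (i, j) = (σ i j, τ j i)`, i.e. `σ_i(j) = σ i j` and
`τ_j(i) = τ j i`. -/

variable {X : Type*}

/-- The map `r : X × X → X × X` determined by families `σ`, `τ` via
`r (i, j) = (σ_i(j), τ_j(i))`. -/
def rmapF (σ τ : X → X → X) : X × X → X × X := fun p => (σ p.1 p.2, τ p.2 p.1)

/-- `r × id` on `X × X × X`. -/
def ridF (r : X × X → X × X) : X × X × X → X × X × X :=
  fun p => ((r (p.1, p.2.1)).1, (r (p.1, p.2.1)).2, p.2.2)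

/-- `id × r` on `X × X × X`. -/
def idrF (r : X × X → X × X) : X × X × X → X × X × X := fun p => (p.1, r p.2)

/-- The braid (Yang–Baxter) equation `(r × id) ∘ (id × r) ∘ (r × id) = (id × r) ∘ (r × id) ∘ (id × r)`. -/
def BraidEq (r : X × X → X × X) : Prop :=
  ridF r ∘ idrF r ∘ ridF r = idrF r ∘ ridF r ∘ idrF r

/-- A non-degenerate involutive set-theoretic solution of the Yang–Baxter equation on `X`:
the maps `σ_i` and `τ_i` are bijective (packaged as equivalences), the induced map
`r (i, j) = (σ_i(j), τ_j(i))` satisfies the braid equation, and `r ∘ r = id`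
(which in particular makes `r` bijective). -/
structure NDIS (X : Type*) where
  σ : X → X ≃ X
  τ : X → X ≃ X
  braid : BraidEq (rmapF (fun i => ⇑(σ i)) (fun i => ⇑(τ i)))
  invol : ∀ p : X × X,
    rmapF (fun i => ⇑(σ i)) (fun i => ⇑(τ i))
      (rmapF (fun i => ⇑(σ i)) (fun i => ⇑(τ i)) p) = p

namespace NDIS

/-- The map `r` of the solution. -/
def r (S : NDIS X) : X × X → X × X := rmapF (fun i => ⇑(S.σ i)) (fun i => ⇑(S.τ i))

/-- The diagonal `D : X → X`, `D(i) = τ_i⁻¹(i)`. -/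
def D (S : NDIS X) : X → X := fun i => (S.τ i).symm i

end NDIS
namespace NDIS

/-- One elementary move on words: apply `r` to two adjacent letters. -/
def Step (S : NDIS X) (x y : List X) : Prop :=
  ∃ (u v : List X) (i j : X), x = u ++ i :: j :: v ∧ y = u ++ S.σ i j :: S.τ j i :: v

/-- The orbit `O(x)` of a word `x` under the equivalence relation generated by the
adjacent `r`-moves (equivalently, the orbit of the induced `S_n`-action on `X^n`). -/
def Orb (S : NDIS X) (x : List X) : Set (List X) := {y | Relation.EqvGen S.Step x y}

/-- `Ψ_k(a) = (D^{k−1}(a), …, D(a), a)`. -/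
def Psi (S : NDIS X) (k : ℕ) (a : X) : List X :=
  (List.range k).map fun t => S.D^[k - 1 - t] a

/-- The inverse of the diagonal `D`. -/
noncomputable def Dinv (S : NDIS X) [Nonempty X] : X → X := Function.invFun S.D

/-- `Ψ_{−k}(a) = (a, D^{−1}(a), …, D^{−(k−1)}(a))`. -/
noncomputable def PsiNeg (S : NDIS X) [Nonempty X] (k : ℕ) (a : X) : List X :=
  (List.range k).map fun t => S.Dinv^[t] a

/-- `σ_x = σ_{a_1} ∘ σ_{a_2} ∘ ⋯ ∘ σ_{a_k}` for a word `x = (a_1, …, a_k)`. -/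
def sigmaWord (S : NDIS X) (x : List X) (z : X) : X := x.foldr (fun a w => S.σ a w) z

/-- `τ_x = τ_{a_k} ∘ ⋯ ∘ τ_{a_2} ∘ τ_{a_1}` for a word `x = (a_1, …, a_k)`. -/
def tauWord (S : NDIS X) (x : List X) (z : X) : X := x.foldl (fun w a => S.τ a w) z

/-- The concatenation `Ψ_{L 0}(a 0) Ψ_{L 1}(a 1) ⋯ Ψ_{L (k-1)}(a (k-1))`. -/
def word (S : NDIS X) {k : ℕ} (L : Fin k → ℕ) (a : Fin k → X) : List X :=
  (List.ofFn fun t => S.Psi (L t) (a t)).flatten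

/-- The concatenation `Ψ_{L (i+1)}(a (i+1)) ⋯ Ψ_{L (j-1)}(a (j-1))` of the blocks strictly
between positions `i` and `j` (the empty word when `j = i + 1`). -/
def midword (S : NDIS X) {k : ℕ} (L : Fin k → ℕ) (a : Fin k → X) (i j : Fin k) : List X :=
  (((List.ofFn fun t => S.Psi (L t) (a t)).drop ((i : ℕ) + 1)).take ((j : ℕ) - (i : ℕ) - 1)).flatten

/-- The family `a` yields a `λ`-element: `a_j ≠ D^{−λ_j}(τ_w(a_i))` for all `i < j`, with
`w = Ψ_{λ_{i+1}}(a_{i+1}) ⋯ Ψ_{λ_{j−1}}(a_{j−1})`. -/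
def IsLambdaFamily (S : NDIS X) [Nonempty X] {k : ℕ} (L : Fin k → ℕ) (a : Fin k → X) : Prop :=
  ∀ i j : Fin k, i < j →
    a j ≠ S.Dinv^[L j] (S.tauWord (S.midword L a i j) (a i))

/-- `x` is a `λ`-element for the partition with positive parts `L 0 ≥ L 1 ≥ ⋯ ≥ L (k-1) > 0`. -/
def IsLambdaWord (S : NDIS X) [Nonempty X] {k : ℕ} (L : Fin k → ℕ) (x : List X) : Prop :=
  ∃ a : Fin k → X, x = S.word L a ∧ S.IsLambdaFamily L a

/-- The bijection `b` of `X^n` applying `r` to the entries in (0-based) positions `j` and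
`j + 1` and fixing all other entries. -/
def bmap (S : NDIS X) {n : ℕ} (j : ℕ) (hj : j + 1 < n) (x : Fin n → X) : Fin n → X :=
  fun t =>
    if (t : ℕ) = j then S.σ (x ⟨j, by omega⟩) (x ⟨j + 1, hj⟩)
    else if (t : ℕ) = j + 1 then S.τ (x ⟨j + 1, hj⟩) (x ⟨j, by omega⟩)
    else x t

/-- One elementary move on `X^n` (as functions `Fin n → X`). -/
def StepF (S : NDIS X) {n : ℕ} (x y : Fin n → X) : Prop :=
  ∃ (j : ℕ) (hj : j + 1 < n), y = S.bmap j hj x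

end NDIS

/-- The offset `λ_1 + ⋯ + λ_i` of the `i`-th block (0-based). -/
def blockOffset {k : ℕ} (L : Fin k → ℕ) (i : Fin k) : ℕ :=
  ∑ t ∈ Finset.univ.filter (fun t => t < i), L t

/-- A `(λ_1, …, λ_k)`-shuffle: a permutation strictly increasing on each consecutive block. -/
def IsShuffle {k n : ℕ} (L : Fin k → ℕ) (θ : Equiv.Perm (Fin n)) : Prop :=
  ∀ (i : Fin k) (p q : Fin n), blockOffset L i ≤ (p : ℕ) → p < q →
    (q : ℕ) < blockOffset L i + L i → θ p < θ q

namespace NDIS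

variable {X : Type*} (S : NDIS X)

lemma inv1 (x y : X) : S.σ (S.σ x y) (S.τ y x) = x := by
  have h := S.invol (x, y); simp [rmapF] at h; exact h.1

lemma inv2 (x y : X) : S.τ (S.τ y x) (S.σ x y) = y := by
  have h := S.invol (x, y); simp [rmapF] at h; exact h.2

lemma braid1 (x y z : X) : S.σ (S.σ x y) (S.σ (S.τ y x) z) = S.σ x (S.σ y z) := by
  have h := congrFun S.braid (x, y, z)
  simp [ridF, idrF, rmapF, Function.comp] at h
  exact h.1

lemma braid3 (x y z : X) : S.τ (S.τ z y) (S.τ (S.σ y z) x) = S.τ z (S.τ y x) := by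
  have h := congrFun S.braid (x, y, z)
  simp [ridF, idrF, rmapF, Function.comp] at h
  exact h.2.2.symm

lemma tau_D (a : X) : S.τ a (S.D a) = a := by simp [D]

/-- `T = σ_a⁻¹(a)`, the inverse of the diagonal. -/
noncomputable def T : X → X := fun a => (S.σ a).symm a

lemma sigma_T (a : X) : S.σ a (S.T a) = a := by simp [T]

lemma D_T (a : X) : S.D (S.T a) = a := by
  have h1 : S.σ a (S.τ (S.T a) a) = a := by
    have := S.inv1 a (S.T a); rwa [S.sigma_T] at this
  have h2 : S.τ (S.T a) a = S.T a := by
    have := (S.σ a).injective (a₁ := S.τ (S.T a) a) (a₂ := S.T a)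
    apply this; rw [h1, S.sigma_T]
  have h3 := S.inv2 a (S.T a)
  rw [S.sigma_T, h2] at h3
  simp [D]
  -- D (T a) = (τ (T a)).symm (T a); suffices τ (T a) a = T a? no:
  -- goal: (S.τ (S.T a)).symm (S.T a) = a i.e. S.τ (S.T a) a = S.T a
  exact (Equiv.symm_apply_eq _).mpr h2.symm

lemma T_D (a : X) : S.T (S.D a) = a := by
  have h0 : S.τ a (S.D a) = a := S.tau_D a
  have h2 := S.inv2 (S.D a) a
  rw [h0] at h2
  -- h2 : S.τ a (S.σ (S.D a) a) = a
  have h3 : S.σ (S.D a) a = S.D a := by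
    apply (S.τ a).injective
    rw [h2, h0]
  -- T (D a) = (σ (D a)).symm (D a) = a since σ (D a) a = D a
  simp [T]
  exact (Equiv.symm_apply_eq _).mpr h3.symm

lemma sigma_D_self (a : X) : S.σ (S.D a) a = S.D a := by
  have := S.sigma_T (S.D a); rwa [S.T_D] at this

lemma D_bij : Function.Bijective S.D :=
  Function.bijective_iff_has_inverse.2 ⟨S.T, S.T_D, S.D_T⟩

lemma D_inj : Function.Injective S.D := S.D_bij.1

lemma key1 (a z : X) : S.τ (S.σ a z) (S.D a) = S.D (S.τ z a) := by
  have h := S.braid3 (S.D a) a z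
  rw [S.tau_D] at h
  -- h : S.τ (S.τ z a) (S.τ (S.σ a z) (S.D a)) = S.τ z a
  apply (S.τ (S.τ z a)).injective
  rw [h, S.tau_D]

lemma key2 (x y : X) : S.D (S.σ (S.τ (S.D y) x) y) = S.σ x (S.D y) := by
  have h := S.braid1 x (S.D y) y
  rw [S.sigma_D_self] at h
  -- h : S.σ (S.σ x (S.D y)) (S.σ (S.τ (S.D y) x) y) = S.σ x (S.D y)
  set u := S.σ x (S.D y) with hu
  have : S.σ (S.τ (S.D y) x) y = S.T u := by
    apply (S.σ u).injective
    rw [h, S.sigma_T]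
  rw [this, S.D_T]

lemma id3 (x y : X) : S.τ x (S.D (S.σ x y)) = S.D y := by
  have h := S.key1 (S.σ x y) (S.τ y x)
  rwa [S.inv1, S.inv2] at h


variable [Nonempty X]

lemma Dinv_eq_T : S.Dinv = S.T := by
  funext a
  have h : Function.LeftInverse S.Dinv S.D := Function.leftInverse_invFun S.D_bij.1
  have := h (S.T a); rwa [S.D_T] at this

lemma D_Dinv (a : X) : S.D (S.Dinv a) = a := by rw [Dinv_eq_T, D_T]

lemma Dinv_D (a : X) : S.Dinv (S.D a) = a := by rw [Dinv_eq_T, T_D]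

lemma sigma_Dinv (a : X) : S.σ a (S.Dinv a) = a := by rw [Dinv_eq_T, sigma_T]

lemma D_Dinv_iter (m : ℕ) (a : X) : S.D^[m] (S.Dinv^[m] a) = a :=
  (Function.LeftInverse.iterate S.D_Dinv m) a

lemma Dinv_D_iter (m : ℕ) (a : X) : S.Dinv^[m] (S.D^[m] a) = a :=
  (Function.LeftInverse.iterate S.Dinv_D m) a

end NDIS
set_option linter.unusedSectionVars false

namespace NDIS

variable {X : Type*} (S : NDIS X)

@[simp] lemma sigmaWord_nil (z : X) : S.sigmaWord [] z = z := rfl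
@[simp] lemma sigmaWord_cons (c : X) (w : List X) (z : X) :
    S.sigmaWord (c :: w) z = S.σ c (S.sigmaWord w z) := rfl
lemma sigmaWord_append (u v : List X) (z : X) :
    S.sigmaWord (u ++ v) z = S.sigmaWord u (S.sigmaWord v z) := by
  simp [sigmaWord, List.foldr_append]

@[simp] lemma tauWord_nil (z : X) : S.tauWord [] z = z := rfl
@[simp] lemma tauWord_cons (c : X) (w : List X) (z : X) :
    S.tauWord (c :: w) z = S.tauWord w (S.τ c z) := rfl
lemma tauWord_append (u v : List X) (z : X) :
    S.tauWord (u ++ v) z = S.tauWord v (S.tauWord u z) := by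
  simp [tauWord, List.foldl_append]

lemma tauWord_inj (w : List X) : Function.Injective (S.tauWord w) := by
  induction w with
  | nil => exact fun a b h => h
  | cons c w ih =>
    intro a b h
    simp only [tauWord_cons] at h
    exact (S.τ c).injective (ih h)

lemma sigmaWord_inj (w : List X) : Function.Injective (S.sigmaWord w) := by
  induction w with
  | nil => exact fun a b h => h
  | cons c w ih =>
    intro a b h
    simp only [sigmaWord_cons] at h
    exact ih ((S.σ c).injective h)

@[simp] lemma Psi_zero (a : X) : S.Psi 0 a = [] := by simp [Psi]

lemma Psi_succ (m : ℕ) (a : X) : S.Psi (m + 1) a = S.D^[m] a :: S.Psi m a := by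
  unfold Psi
  rw [List.range_succ_eq_map, List.map_cons, List.map_map]
  refine congrArg₂ List.cons (by simp) (List.map_congr_left ?_)
  intro t ht
  rw [List.mem_range] at ht
  show S.D^[m + 1 - 1 - (t + 1)] a = S.D^[m - 1 - t] a
  congr 1
  omega

lemma Psi_snoc (m : ℕ) (a : X) : S.Psi (m + 1) a = S.Psi m (S.D a) ++ [a] := by
  unfold Psi
  rw [List.range_succ, List.map_append, List.map_cons, List.map_nil]
  refine congrArg₂ (· ++ ·) (List.map_congr_left ?_) (by simp)
  intro t ht
  rw [List.mem_range] at ht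
  show S.D^[m + 1 - 1 - t] a = S.D^[m - 1 - t] (S.D a)
  rw [← Function.iterate_succ_apply]
  congr 1
  omega

lemma PsiNeg_succ [Nonempty X] (m : ℕ) (c : X) :
    S.PsiNeg (m + 1) c = c :: S.PsiNeg m (S.Dinv c) := by
  unfold PsiNeg
  rw [List.range_succ_eq_map, List.map_cons, List.map_map]
  refine congrArg₂ List.cons (by simp) (List.map_congr_left ?_)
  intro t _
  show S.Dinv^[t + 1] c = S.Dinv^[t] (S.Dinv c)
  rw [Function.iterate_succ_apply]

lemma PsiNeg_eq_Psi [Nonempty X] (m : ℕ) (c : X) :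
    S.PsiNeg (m + 1) c = S.Psi (m + 1) (S.Dinv^[m] c) := by
  unfold PsiNeg Psi
  apply List.map_congr_left
  intro t ht
  rw [List.mem_range] at ht
  have h1 : m + 1 - 1 - t = m - t := by omega
  rw [h1]
  have h2 : S.Dinv^[m] c = S.Dinv^[m - t] (S.Dinv^[t] c) := by
    rw [← Function.iterate_add_apply]
    congr 1
    omega
  rw [h2, S.D_Dinv_iter]

lemma tauWord_psi_D (l : ℕ) (a : X) : S.tauWord (S.Psi l a) (S.D^[l] a) = a := by
  induction l with
  | zero => simp
  | succ m ih =>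
    rw [Psi_succ, tauWord_cons, Function.iterate_succ_apply', S.tau_D, ih]

lemma sig_psi_D (l : ℕ) (a : X) : S.sigmaWord (S.Psi l (S.D a)) a = S.D^[l] a := by
  induction l generalizing a with
  | zero => simp
  | succ m ih =>
    rw [Psi_snoc, sigmaWord_append]
    simp only [sigmaWord_cons, sigmaWord_nil]
    rw [S.sigma_D_self, ih, ← Function.iterate_succ_apply, Function.iterate_succ_apply']

lemma sigma_psi_Dinv [Nonempty X] (l : ℕ) (a : X) :
    S.sigmaWord (S.Psi (l + 1) a) (S.Dinv a) = S.D^[l] a := by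
  rw [Psi_snoc, sigmaWord_append]
  simp only [sigmaWord_cons, sigmaWord_nil]
  rw [S.sigma_Dinv, S.sig_psi_D]

lemma lemPsiTau (m : ℕ) (a z : X) :
    S.τ (S.sigmaWord (S.Psi m a) z) (S.D^[m] a) = S.D^[m] (S.τ z a) := by
  induction m with
  | zero => simp
  | succ j ih =>
    rw [Psi_succ, sigmaWord_cons]
    rw [Function.iterate_succ_apply' S.D j a, Function.iterate_succ_apply' S.D j (S.τ z a)]
    rw [S.key1 (S.D^[j] a) (S.sigmaWord (S.Psi j a) z), ih]

lemma id3w (w : List X) (z : X) : S.tauWord w (S.D (S.sigmaWord w z)) = S.D z := by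
  induction w generalizing z with
  | nil => simp
  | cons c w ih =>
    rw [sigmaWord_cons, tauWord_cons, S.id3, ih]

lemma lemB (l : ℕ) (a c : X) :
    S.D (S.sigmaWord (S.Psi l (S.τ (S.D c) a)) c) = S.sigmaWord (S.Psi l a) (S.D c) := by
  induction l generalizing a with
  | zero => simp
  | succ m ih =>
    rw [Psi_succ, Psi_succ, sigmaWord_cons, sigmaWord_cons]
    have hDla : S.D^[m] (S.τ (S.D c) a)
        = S.τ (S.sigmaWord (S.Psi m a) (S.D c)) (S.D^[m] a) := (S.lemPsiTau m a (S.D c)).symm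
    rw [hDla]
    set v := S.sigmaWord (S.Psi m (S.τ (S.D c) a)) c with hvdef
    have hDv : S.D v = S.sigmaWord (S.Psi m a) (S.D c) := ih a
    rw [← hDv]
    exact S.key2 (S.D^[m] a) v

end NDIS
namespace NDIS

/-- The word of pushed letters. -/
noncomputable def Cw {X : Type*} [Nonempty X] (S : NDIS X) (l : ℕ) : ℕ → X → X → List X
  | 0, _, _ => []
  | (j+1), a, b =>
      S.sigmaWord (S.Psi l a) (S.D^[j] b) :: Cw S l j (S.τ (S.D^[j] b) a) b

variable {X : Type*} (S : NDIS X)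

@[simp] lemma Cw_zero [Nonempty X] (l : ℕ) (a b : X) : S.Cw l 0 a b = [] := rfl

lemma Cw_succ [Nonempty X] (l j : ℕ) (a b : X) :
    S.Cw l (j+1) a b
      = S.sigmaWord (S.Psi l a) (S.D^[j] b) :: S.Cw l j (S.τ (S.D^[j] b) a) b := rfl

lemma step_context (u v x y : List X) (h : S.Step x y) :
    S.Step (u ++ x ++ v) (u ++ y ++ v) := by
  obtain ⟨u', v', p, q, hx, hy⟩ := h
  exact ⟨u ++ u', v' ++ v, p, q, by simp [hx], by simp [hy]⟩

lemma eqv_context (u v x y : List X) (h : Relation.EqvGen S.Step x y) :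
    Relation.EqvGen S.Step (u ++ x ++ v) (u ++ y ++ v) := by
  induction h with
  | rel a b hab => exact Relation.EqvGen.rel _ _ (S.step_context u v a b hab)
  | refl a => exact Relation.EqvGen.refl _
  | symm a b _ ih => exact ih.symm _ _
  | trans a b c _ _ ih1 ih2 => exact ih1.trans _ _ _ ih2

lemma tauWord_step {x y : List X} (h : S.Step x y) (z : X) :
    S.tauWord y z = S.tauWord x z := by
  obtain ⟨u, v, p, q, hx, hy⟩ := h
  subst hx; subst hy
  rw [tauWord_append, tauWord_append, tauWord_cons, tauWord_cons,
    tauWord_cons, tauWord_cons]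
  rw [S.braid3 (S.tauWord u z) p q]

lemma sigmaWord_step {x y : List X} (h : S.Step x y) (z : X) :
    S.sigmaWord y z = S.sigmaWord x z := by
  obtain ⟨u, v, p, q, hx, hy⟩ := h
  subst hx; subst hy
  rw [sigmaWord_append, sigmaWord_append, sigmaWord_cons, sigmaWord_cons,
    sigmaWord_cons, sigmaWord_cons]
  rw [S.braid1 p q (S.sigmaWord v z)]

lemma tauWord_eqv {x y : List X} (h : Relation.EqvGen S.Step x y) (z : X) :
    S.tauWord y z = S.tauWord x z := by
  induction h with
  | rel a b hab => exact S.tauWord_step hab z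
  | refl a => rfl
  | symm a b _ ih => exact ih.symm
  | trans a b c _ _ ih1 ih2 => exact ih2.trans ih1

lemma sigmaWord_eqv {x y : List X} (h : Relation.EqvGen S.Step x y) (z : X) :
    S.sigmaWord y z = S.sigmaWord x z := by
  induction h with
  | rel a b hab => exact S.sigmaWord_step hab z
  | refl a => rfl
  | symm a b _ ih => exact ih.symm
  | trans a b c _ _ ih1 ih2 => exact ih2.trans ih1

lemma push (l : ℕ) (a z : X) :
    Relation.EqvGen S.Step (S.Psi l a ++ [z])
      (S.sigmaWord (S.Psi l a) z :: S.Psi l (S.τ z a)) := by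
  induction l generalizing a with
  | zero => simp; exact Relation.EqvGen.refl _
  | succ m ih =>
    have e0 : S.Psi (m+1) a ++ [z] = S.D^[m] a :: (S.Psi m a ++ [z]) := by
      rw [S.Psi_succ]; rfl
    rw [e0]
    have h1 : Relation.EqvGen S.Step (S.D^[m] a :: (S.Psi m a ++ [z]))
        (S.D^[m] a :: (S.sigmaWord (S.Psi m a) z :: S.Psi m (S.τ z a))) := by
      have := S.eqv_context [S.D^[m] a] [] _ _ (ih a)
      simpa using this
    have h2 : S.Step (S.D^[m] a :: (S.sigmaWord (S.Psi m a) z :: S.Psi m (S.τ z a)))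
        (S.sigmaWord (S.Psi (m+1) a) z :: S.Psi (m+1) (S.τ z a)) := by
      refine ⟨[], S.Psi m (S.τ z a), S.D^[m] a, S.sigmaWord (S.Psi m a) z, by simp, ?_⟩
      rw [S.Psi_succ m (S.τ z a), S.Psi_succ m a, sigmaWord_cons, S.lemPsiTau m a z]
      simp
    exact Relation.EqvGen.trans _ _ _ h1 (Relation.EqvGen.rel _ _ h2)

lemma block [Nonempty X] (l : ℕ) (b : X) : ∀ (j : ℕ) (a : X),
    Relation.EqvGen S.Step (S.Psi l a ++ S.Psi j b)
      (S.Cw l j a b ++ S.Psi l (S.tauWord (S.Psi j b) a)) := by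
  intro j
  induction j with
  | zero =>
    intro a
    simp only [Psi_zero, Cw_zero, List.append_nil, List.nil_append, tauWord_nil]
    exact Relation.EqvGen.refl _
  | succ m ih =>
    intro a
    rw [Psi_succ]
    have e1 : S.Psi l a ++ S.D^[m] b :: S.Psi m b
        = ((S.Psi l a ++ [S.D^[m] b]) ++ S.Psi m b) := by simp
    rw [e1]
    have h1 : Relation.EqvGen S.Step ((S.Psi l a ++ [S.D^[m] b]) ++ S.Psi m b)
        (S.sigmaWord (S.Psi l a) (S.D^[m] b) :: (S.Psi l (S.τ (S.D^[m] b) a) ++ S.Psi m b)) := by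
      have := S.eqv_context [] (S.Psi m b) _ _ (S.push l a (S.D^[m] b))
      simpa using this
    have h2 : Relation.EqvGen S.Step
        (S.sigmaWord (S.Psi l a) (S.D^[m] b) :: (S.Psi l (S.τ (S.D^[m] b) a) ++ S.Psi m b))
        (S.sigmaWord (S.Psi l a) (S.D^[m] b) ::
          (S.Cw l m (S.τ (S.D^[m] b) a) b ++ S.Psi l (S.tauWord (S.Psi m b) (S.τ (S.D^[m] b) a)))) := by
      have := S.eqv_context [S.sigmaWord (S.Psi l a) (S.D^[m] b)] [] _ _ (ih (S.τ (S.D^[m] b) a))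
      simpa using this
    refine Relation.EqvGen.trans _ _ _ h1 (Relation.EqvGen.trans _ _ _ h2 ?_)
    rw [Cw_succ, tauWord_cons]
    simp only [List.cons_append]
    exact Relation.EqvGen.refl _

lemma Cw_eq [Nonempty X] (l : ℕ) (b : X) : ∀ (j : ℕ) (a : X),
    S.Cw l (j + 1) a b = S.PsiNeg (j + 1) (S.sigmaWord (S.Psi l a) (S.D^[j] b)) := by
  intro j
  induction j with
  | zero =>
    intro a
    rw [Cw_succ, PsiNeg_succ]
    simp [Cw_zero, PsiNeg]
  | succ m ih =>
    intro a
    rw [Cw_succ, ih (S.τ (S.D^[m+1] b) a)]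
    have hD : S.D (S.sigmaWord (S.Psi l (S.τ (S.D^[m+1] b) a)) (S.D^[m] b))
        = S.sigmaWord (S.Psi l a) (S.D^[m+1] b) := by
      have := S.lemB l a (S.D^[m] b)
      rwa [← Function.iterate_succ_apply' S.D m b] at this
    rw [← hD, S.PsiNeg_succ (m+1), S.Dinv_D]

end NDIS
namespace NDIS

variable {X : Type*} (S : NDIS X) [Nonempty X]

/-- The key exchange orbit lemma on a pair of blocks. -/
lemma ex_orbit (m : ℕ) (A B : X) :
    Relation.EqvGen S.Step (S.Psi (m+1) A ++ S.Psi (m+1) B)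
      (S.PsiNeg (m+1) (S.sigmaWord (S.Psi (m+1) A) (S.D^[m] B))
        ++ S.Psi (m+1) (S.tauWord (S.Psi (m+1) B) A)) := by
  have h := S.block (m+1) B (m+1) A
  rwa [S.Cw_eq (m+1) B m A] at h

lemma pair_tau (m : ℕ) (A B : X) (z : X) :
    S.tauWord (S.PsiNeg (m+1) (S.sigmaWord (S.Psi (m+1) A) (S.D^[m] B))
        ++ S.Psi (m+1) (S.tauWord (S.Psi (m+1) B) A)) z
      = S.tauWord (S.Psi (m+1) A ++ S.Psi (m+1) B) z :=
  S.tauWord_eqv (S.ex_orbit m A B) z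

lemma pair_sigma (m : ℕ) (A B : X) (z : X) :
    S.sigmaWord (S.PsiNeg (m+1) (S.sigmaWord (S.Psi (m+1) A) (S.D^[m] B))
        ++ S.Psi (m+1) (S.tauWord (S.Psi (m+1) B) A)) z
      = S.sigmaWord (S.Psi (m+1) A ++ S.Psi (m+1) B) z :=
  S.sigmaWord_eqv (S.ex_orbit m A B) z

lemma star (m : ℕ) (A B : X) :
    S.sigmaWord (S.Psi (m+1) (S.tauWord (S.Psi (m+1) B) A)) (S.Dinv B)
      = S.Dinv^[m+1] (S.sigmaWord (S.Psi (m+1) A) (S.D^[m] B)) := by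
  set c0 := S.sigmaWord (S.Psi (m+1) A) (S.D^[m] B) with hc0
  set A2 := S.tauWord (S.Psi (m+1) B) A with hA2
  apply S.sigmaWord_inj (S.Psi (m+1) (S.Dinv^[m] c0))
  have h1 : S.sigmaWord (S.Psi (m+1) (S.Dinv^[m] c0))
      (S.sigmaWord (S.Psi (m+1) A2) (S.Dinv B))
      = S.sigmaWord (S.Psi (m+1) A ++ S.Psi (m+1) B) (S.Dinv B) := by
    rw [← sigmaWord_append, ← S.PsiNeg_eq_Psi, S.pair_sigma]
  rw [h1, sigmaWord_append, S.sigma_psi_Dinv, ← hc0]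
  have h2 : S.Dinv^[m+1] c0 = S.Dinv (S.Dinv^[m] c0) := Function.iterate_succ_apply' _ _ _
  rw [h2, S.sigma_psi_Dinv, S.D_Dinv_iter]

lemma invkey (m : ℕ) (A B : X) :
    S.tauWord (S.Psi (m+1) (S.tauWord (S.Psi (m+1) B) A))
      (S.Dinv^[m] (S.sigmaWord (S.Psi (m+1) A) (S.D^[m] B))) = B := by
  set c0 := S.sigmaWord (S.Psi (m+1) A) (S.D^[m] B) with hc0
  set A2 := S.tauWord (S.Psi (m+1) B) A with hA2
  have h1 : S.Dinv^[m] c0 = S.D (S.sigmaWord (S.Psi (m+1) A2) (S.Dinv B)) := by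
    rw [S.star m A B, ← hc0, Function.iterate_succ_apply' S.Dinv m c0, S.D_Dinv]
  rw [h1, S.id3w, S.D_Dinv]

/-- Case (ii): the first new block versus earlier blocks. -/
lemma Eii (m : ℕ) (A B g : X)
    (h : S.Dinv^[m] (S.sigmaWord (S.Psi (m+1) A) (S.D^[m] B)) = S.Dinv^[m+1] g) :
    B = S.Dinv^[m+1] (S.tauWord (S.Psi (m+1) A) g) := by
  set c0 := S.sigmaWord (S.Psi (m+1) A) (S.D^[m] B) with hc0
  have h1 : c0 = S.Dinv g := by
    have h2 := congrArg (S.D^[m]) h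
    rwa [S.D_Dinv_iter, Function.iterate_succ_apply, S.D_Dinv_iter] at h2
  have h2 : S.D c0 = g := by rw [h1, S.D_Dinv]
  have h3 : S.tauWord (S.Psi (m+1) A) (S.D c0) = S.D^[m+1] B := by
    rw [hc0, S.id3w]
    exact (Function.iterate_succ_apply' S.D m B).symm
  rw [← h2, h3, S.Dinv_D_iter]

/-- Case (iii): the second new block versus earlier blocks. -/
lemma Eiii (m : ℕ) (A B g : X)
    (h : S.tauWord (S.Psi (m+1) B) A
      = S.Dinv^[m+1] (S.tauWord (S.Psi (m+1)
          (S.Dinv^[m] (S.sigmaWord (S.Psi (m+1) A) (S.D^[m] B)))) g)) :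
    A = S.Dinv^[m+1] g := by
  have h1 : S.D^[m+1] (S.tauWord (S.Psi (m+1) B) A)
      = S.tauWord (S.Psi (m+1)
          (S.Dinv^[m] (S.sigmaWord (S.Psi (m+1) A) (S.D^[m] B)))) g := by
    have := congrArg (S.D^[m+1]) h
    rwa [S.D_Dinv_iter] at this
  have h3 := S.tauWord_psi_D (m+1) (S.tauWord (S.Psi (m+1) B) A)
  rw [h1, ← S.tauWord_append, ← S.PsiNeg_eq_Psi, S.pair_tau, S.tauWord_append] at h3
  have h4 : A = S.tauWord (S.Psi (m+1) A) g := (S.tauWord_inj _ h3).symm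
  have h5 : S.tauWord (S.Psi (m+1) A) g = S.tauWord (S.Psi (m+1) A) (S.D^[m+1] A) := by
    rw [S.tauWord_psi_D]
    exact h4.symm
  have h6 := S.tauWord_inj _ h5
  rw [h6, S.Dinv_D_iter]

/-- Case (v): the two new blocks against each other. -/
lemma Ev (m : ℕ) (A B : X)
    (h : S.tauWord (S.Psi (m+1) B) A
      = S.Dinv^[m+1] (S.Dinv^[m] (S.sigmaWord (S.Psi (m+1) A) (S.D^[m] B)))) :
    B = S.Dinv^[m+1] A := by
  set c0 := S.sigmaWord (S.Psi (m+1) A) (S.D^[m] B) with hc0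
  set A2 := S.tauWord (S.Psi (m+1) B) A with hA2
  have hB' : S.Dinv^[m] c0 = S.D^[m+1] A2 := by
    rw [h, S.D_Dinv_iter]
  have h1 : S.sigmaWord (S.Psi (m+1) A2) (S.Dinv B) = S.D^[m] A2 := by
    rw [S.star m A B, ← hc0, Function.iterate_succ_apply' S.Dinv m c0, hB',
      Function.iterate_succ_apply' S.D m A2, S.Dinv_D]
  have h2 : S.sigmaWord (S.Psi (m+1) A2) (S.Dinv A2) = S.D^[m] A2 := S.sigma_psi_Dinv m A2
  have h3 : S.Dinv B = S.Dinv A2 := S.sigmaWord_inj _ (h1.trans h2.symm)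
  have h4 : B = A2 := by
    have := congrArg S.D h3
    rwa [S.D_Dinv, S.D_Dinv] at this
  have h5 : S.tauWord (S.Psi (m+1) B) A = S.tauWord (S.Psi (m+1) B) (S.D^[m+1] B) := by
    rw [S.tauWord_psi_D, ← hA2, ← h4]
  have h6 := S.tauWord_inj _ h5
  rw [h6, S.Dinv_D_iter]

end NDIS
section ListAux

variable {α : Type*}

lemma listSegCongr (l l' : List α) (hlen : l.length = l'.length) (s m : ℕ)
    (h : ∀ j (hj : j < l.length), s ≤ j → j < s + m → l[j] = l'[j]'(hlen ▸ hj)) :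
    (l.drop s).take m = (l'.drop s).take m := by
  apply List.ext_getElem
  · simp [hlen]
  · intro n h1 h2
    rw [List.getElem_take, List.getElem_drop, List.getElem_take, List.getElem_drop]
    simp only [List.length_take, List.length_drop, lt_min_iff] at h1
    exact h (s + n) (by omega) (by omega) (by omega)

lemma listTakeCongr (l l' : List α) (hlen : l.length = l'.length) (m : ℕ)
    (h : ∀ j (hj : j < l.length), j < m → l[j] = l'[j]'(hlen ▸ hj)) :
    l.take m = l'.take m := by
  have := listSegCongr l l' hlen 0 m (fun j hj _ hm => h j hj (by omega))
  simpa using this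

lemma listDropCongr (l l' : List α) (hlen : l.length = l'.length) (s : ℕ)
    (h : ∀ j (hj : j < l.length), s ≤ j → l[j] = l'[j]'(hlen ▸ hj)) :
    l.drop s = l'.drop s := by
  apply List.ext_getElem
  · simp [hlen]
  · intro n h1 h2
    rw [List.getElem_drop, List.getElem_drop]
    simp only [List.length_drop] at h1
    exact h (s + n) (by omega) (by omega)

lemma flatten_split (l : List (List α)) (i : ℕ) (h : i + 1 < l.length) :
    l.flatten = (l.take i).flatten ++
      (l[i]'(by omega) ++ ((l[i+1]'h) ++ (l.drop (i+2)).flatten)) := by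
  conv_lhs => rw [← List.take_append_drop i l]
  rw [List.drop_eq_getElem_cons (show i < l.length by omega)]
  rw [List.drop_eq_getElem_cons (show i + 1 < l.length from h)]
  rw [List.flatten_append, List.flatten_cons, List.flatten_cons]

end ListAux

namespace NDIS

variable {X : Type*} (S : NDIS X)

lemma midword_congr {k : ℕ} (L : Fin k → ℕ) (b a : Fin k → X) (p q : Fin k)
    (h : ∀ t : Fin k, (p : ℕ) < (t : ℕ) → (t : ℕ) < (q : ℕ) → b t = a t) :
    S.midword L b p q = S.midword L a p q := by
  unfold midword
  congr 1
  refine listSegCongr _ _ (by simp) _ _ ?_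
  intro j hj h1 h2
  have hjk : j < k := by simpa using hj
  simp only [List.getElem_ofFn]
  rw [h ⟨j, hjk⟩ (show (p : ℕ) < j by omega) (show j < (q : ℕ) by omega)]

lemma midword_split {k : ℕ} (L : Fin k → ℕ) (c : Fin k → X) (p r q : Fin k)
    (h1 : (p : ℕ) < (r : ℕ)) (h2 : (r : ℕ) < (q : ℕ)) :
    S.midword L c p q
      = S.midword L c p r ++ (S.Psi (L r) (c r) ++ S.midword L c r q) := by
  unfold midword
  have hr : (r : ℕ) < (List.ofFn fun t => S.Psi (L t) (c t)).length := by
    simp [r.isLt]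
  have e : (q : ℕ) - (p : ℕ) - 1 = ((r : ℕ) - (p : ℕ) - 1) + (((q : ℕ) - (r : ℕ) - 1) + 1) := by
    omega
  rw [e, List.take_add, List.drop_drop]
  have e2 : (p : ℕ) + 1 + ((r : ℕ) - (p : ℕ) - 1) = (r : ℕ) := by omega
  rw [e2]
  rw [List.drop_eq_getElem_cons hr]
  rw [List.take_succ_cons]
  rw [List.flatten_append, List.flatten_cons, List.getElem_ofFn]

lemma midword_adj {k : ℕ} (L : Fin k → ℕ) (c : Fin k → X) (p q : Fin k)
    (h : (q : ℕ) = (p : ℕ) + 1) : S.midword L c p q = [] := by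
  unfold midword
  rw [show (q : ℕ) - (p : ℕ) - 1 = 0 by omega]
  simp

end NDIS
namespace NDIS

variable {X : Type*} (S : NDIS X) [Nonempty X]

lemma main_aux {k : ℕ} (L : Fin k → ℕ) (i : ℕ) (hi : i + 1 < k) (hik : i < k) (m : ℕ)
    (hl1 : L ⟨i, hik⟩ = m + 1) (hl2 : L ⟨i + 1, hi⟩ = m + 1)
    (a b : Fin k → X) (hfam : S.IsLambdaFamily L a)
    (hb : ∀ t : Fin k, b t = if (t : ℕ) = i
        then S.Dinv^[m] (S.sigmaWord (S.Psi (m+1) (a ⟨i, hik⟩)) (S.D^[m] (a ⟨i+1, hi⟩)))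
        else if (t : ℕ) = i + 1
        then S.tauWord (S.Psi (m+1) (a ⟨i+1, hi⟩)) (a ⟨i, hik⟩)
        else a t) :
    S.IsLambdaFamily L b ∧ Relation.EqvGen S.Step (S.word L a) (S.word L b) := by
  have hiv : ((⟨i, hik⟩ : Fin k) : ℕ) = i := rfl
  have hi1v : ((⟨i + 1, hi⟩ : Fin k) : ℕ) = i + 1 := rfl
  set A := a ⟨i, hik⟩ with hA
  set B := a ⟨i+1, hi⟩ with hB
  set c0 := S.sigmaWord (S.Psi (m+1) A) (S.D^[m] B) with hc0
  set A2 := S.tauWord (S.Psi (m+1) B) A with hA2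
  have hbi : b ⟨i, hik⟩ = S.Dinv^[m] c0 := by rw [hb]; simp
  have hbi1 : b ⟨i+1, hi⟩ = A2 := by rw [hb]; simp
  have hbo : ∀ t : Fin k, (t : ℕ) ≠ i → (t : ℕ) ≠ i + 1 → b t = a t := by
    intro t h1 h2; rw [hb]; simp [h1, h2]
  constructor
  · -- IsLambdaFamily L b
    intro p q hpq
    have hpqv : (p : ℕ) < (q : ℕ) := hpq
    by_cases hq1 : (q : ℕ) < i
    · -- fully below
      rw [hbo p (by omega) (by omega), hbo q (by omega) (by omega),
        S.midword_congr L b a p q (fun t h1 h2 => hbo t (by omega) (by omega))]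
      exact hfam p q hpq
    by_cases hq2 : (q : ℕ) = i
    · -- case (ii) : q = iF, p < i
      have hq : q = ⟨i, hik⟩ := Fin.ext hq2
      subst hq
      rw [hbi, hl1, hbo p (by omega) (by omega),
        S.midword_congr L b a p _ (fun t h1 h2 => hbo t (by omega) (by omega))]
      intro hEq
      have h2 := S.Eii m A B _ hEq
      refine hfam p ⟨i+1, hi⟩ (by simp [Fin.lt_def]; omega) ?_
      rw [hl2, ← hB,
        S.midword_split L a p ⟨i, hik⟩ ⟨i+1, hi⟩ (by omega) (by simp),
        S.midword_adj L a ⟨i, hik⟩ ⟨i+1, hi⟩ (by simp),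
        S.tauWord_append, S.tauWord_append, hl1, ← hA]
      simpa using h2
    by_cases hq3 : (q : ℕ) = i + 1
    · have hq : q = ⟨i+1, hi⟩ := Fin.ext hq3
      subst hq
      by_cases hp1 : (p : ℕ) = i
      · -- case (v)
        have hp : p = ⟨i, hik⟩ := Fin.ext hp1
        subst hp
        rw [hbi1, hbi, hl2, S.midword_adj L b _ _ (by simp), tauWord_nil]
        intro hEq
        have h2 := S.Ev m A B hEq
        refine hfam ⟨i, hik⟩ ⟨i+1, hi⟩ (by simp [Fin.lt_def]) ?_
        rw [hl2, ← hB, S.midword_adj L a _ _ (by simp), tauWord_nil, ← hA]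
        exact h2
      · -- case (iii) : p < i
        have hpi : (p : ℕ) < i := by omega
        rw [hbi1, hl2, hbo p (by omega) (by omega),
          S.midword_split L b p ⟨i, hik⟩ ⟨i+1, hi⟩ (by omega) (by simp),
          S.midword_adj L b ⟨i, hik⟩ ⟨i+1, hi⟩ (by simp),
          S.midword_congr L b a p ⟨i, hik⟩ (fun t h1 h2 => hbo t (by omega) (by omega)),
          hl1, hbi, S.tauWord_append, S.tauWord_append, tauWord_nil]
        intro hEq
        have h2 := S.Eiii m A B _ hEq
        refine hfam p ⟨i, hik⟩ (by simp [Fin.lt_def]; omega) ?_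
        rw [hl1, ← hA]
        exact h2
    · -- q > i + 1
      have hq4 : i + 1 < (q : ℕ) := by omega
      by_cases hp1 : (p : ℕ) = i
      · -- case (vi)
        have hp : p = ⟨i, hik⟩ := Fin.ext hp1
        subst hp
        rw [hbi, hbo q (by omega) (by omega),
          S.midword_split L b ⟨i, hik⟩ ⟨i+1, hi⟩ q (by simp) (by simpa using hq4),
          S.midword_adj L b ⟨i, hik⟩ ⟨i+1, hi⟩ (by simp),
          S.midword_congr L b a ⟨i+1, hi⟩ q (fun t h1 h2 => hbo t (by omega) (by omega)),
          hl2, hbi1, S.tauWord_append, S.tauWord_append, tauWord_nil,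
          S.invkey m A B]
        exact hfam ⟨i+1, hi⟩ q (by simp [Fin.lt_def]; omega)
      by_cases hp2 : (p : ℕ) = i + 1
      · -- case (vii)
        have hp : p = ⟨i+1, hi⟩ := Fin.ext hp2
        subst hp
        rw [hbi1, hbo q (by omega) (by omega),
          S.midword_congr L b a ⟨i+1, hi⟩ q (fun t h1 h2 => hbo t (by omega) (by omega))]
        have h2 := hfam ⟨i, hik⟩ q (by simp [Fin.lt_def]; omega)
        rw [S.midword_split L a ⟨i, hik⟩ ⟨i+1, hi⟩ q (by simp) (by simpa using hq4),
          S.midword_adj L a ⟨i, hik⟩ ⟨i+1, hi⟩ (by simp),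
          S.tauWord_append, S.tauWord_append, tauWord_nil, hl2, ← hB, ← hA, ← hA2] at h2
        exact h2
      by_cases hp3 : (p : ℕ) < i
      · -- case (iv)
        rw [hbo p (by omega) (by omega), hbo q (by omega) (by omega)]
        have hmid : S.tauWord (S.midword L b p q) (a p) = S.tauWord (S.midword L a p q) (a p) := by
          rw [S.midword_split L b p ⟨i, hik⟩ q (by omega) (by simp; omega),
            S.midword_split L b ⟨i, hik⟩ ⟨i+1, hi⟩ q (by simp) (by simpa using hq4),
            S.midword_adj L b ⟨i, hik⟩ ⟨i+1, hi⟩ (by simp),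
            S.midword_congr L b a p ⟨i, hik⟩ (fun t h1 h2 => hbo t (by omega) (by omega)),
            S.midword_congr L b a ⟨i+1, hi⟩ q (fun t h1 h2 => hbo t (by omega) (by omega)),
            S.midword_split L a p ⟨i, hik⟩ q (by omega) (by simp; omega),
            S.midword_split L a ⟨i, hik⟩ ⟨i+1, hi⟩ q (by simp) (by simpa using hq4),
            S.midword_adj L a ⟨i, hik⟩ ⟨i+1, hi⟩ (by simp)]
          rw [hbi, hbi1, hl1, hl2, ← hA, ← hB]
          simp only [S.tauWord_append, tauWord_nil, List.nil_append]
          congr 1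
          have hpair := S.pair_tau m A B (S.tauWord (S.midword L a p ⟨i, hik⟩) (a p))
          rw [S.PsiNeg_eq_Psi, S.tauWord_append, S.tauWord_append] at hpair
          exact hpair
        rw [hmid]
        exact hfam p q hpq
      · -- p > i + 1 : fully above
        have hp4 : i + 1 < (p : ℕ) := by omega
        rw [hbo p (by omega) (by omega), hbo q (by omega) (by omega),
          S.midword_congr L b a p q (fun t h1 h2 => hbo t (by omega) (by omega))]
        exact hfam p q hpq
  · -- orbit
    have hlen_a : (List.ofFn fun t => S.Psi (L t) (a t)).length = k := List.length_ofFn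
    have hlen_b : (List.ofFn fun t => S.Psi (L t) (b t)).length = k := List.length_ofFn
    have htake : List.take i (List.ofFn fun t => S.Psi (L t) (b t))
        = List.take i (List.ofFn fun t => S.Psi (L t) (a t)) := by
      apply listTakeCongr _ _ (by simp)
      intro j hj hjm
      have hjk : j < k := by simpa using hj
      simp only [List.getElem_ofFn]
      rw [hbo ⟨j, hjk⟩ (by simpa using by omega : ((⟨j, hjk⟩ : Fin k) : ℕ) ≠ i) (by
        show j ≠ i + 1; omega)]
    have hdrop : List.drop (i+2) (List.ofFn fun t => S.Psi (L t) (b t))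
        = List.drop (i+2) (List.ofFn fun t => S.Psi (L t) (a t)) := by
      apply listDropCongr _ _ (by simp)
      intro j hj hjm
      have hjk : j < k := by simpa using hj
      simp only [List.getElem_ofFn]
      rw [hbo ⟨j, hjk⟩ (show j ≠ i by omega) (show j ≠ i + 1 by omega)]
    have e_a : S.word L a
        = (List.take i (List.ofFn fun t => S.Psi (L t) (a t))).flatten ++
          (S.Psi (m+1) A ++ (S.Psi (m+1) B ++
            (List.drop (i+2) (List.ofFn fun t => S.Psi (L t) (a t))).flatten)) := by
      unfold word
      rw [flatten_split _ i (by simpa using hi)]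
      simp only [List.getElem_ofFn]
      rw [show L ⟨i, by simpa using hik⟩ = m + 1 from hl1,
        show L ⟨i+1, by simpa using hi⟩ = m + 1 from hl2]
    have e_b : S.word L b
        = (List.take i (List.ofFn fun t => S.Psi (L t) (a t))).flatten ++
          (S.PsiNeg (m+1) c0 ++ (S.Psi (m+1) A2 ++
            (List.drop (i+2) (List.ofFn fun t => S.Psi (L t) (a t))).flatten)) := by
      unfold word
      rw [flatten_split _ i (by simpa using hi)]
      simp only [List.getElem_ofFn]
      rw [htake, hdrop,
        show L ⟨i, by simpa using hik⟩ = m + 1 from hl1,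
        show L ⟨i+1, by simpa using hi⟩ = m + 1 from hl2,
        show b ⟨i, by simpa using hik⟩ = S.Dinv^[m] c0 from hbi,
        show b ⟨i+1, by simpa using hi⟩ = A2 from hbi1,
        ← S.PsiNeg_eq_Psi]
    rw [e_a, e_b]
    have h := S.eqv_context
      ((List.take i (List.ofFn fun t => S.Psi (L t) (a t))).flatten)
      ((List.drop (i+2) (List.ofFn fun t => S.Psi (L t) (a t))).flatten)
      _ _ (S.ex_orbit m A B)
    simpa [List.append_assoc] using h

end NDIS

/-- Let `(X, r)` be a non-degenerate involutive solution with `|X| = m ≥ 2`,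
`λ ∈ P(n, m)` with positive parts `L` (listed in decreasing order) satisfying
`λ_i = λ_{i+1} = l > 0` for some `i`, and let `x = Ψ_{λ_1}(a_1) ⋯ Ψ_{λ_k}(a_k)` be a
`λ`-element. Let `x′` be obtained from `x` by replacing the consecutive blocks
`Ψ_l(a_i) Ψ_l(a_{i+1})` by `Ψ_{−l}(σ_{Ψ_l(a_i)}(D^{l−1}(a_{i+1}))) Ψ_l(τ_{Ψ_l(a_{i+1})}(a_i))`.
Then `x′` is again a `λ`-element and `x′ ∈ O(x)`. -/
theorem exchange_preserves_lambda_element {X : Type*} [Fintype X] [Nonempty X]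
    (S : NDIS X) (hm : 2 ≤ Fintype.card X)
    {n k : ℕ} (L : Fin k → ℕ) (hpos : ∀ t, 0 < L t) (hmono : Antitone L)
    (hsum : ∑ t, L t = n) (hk : k ≤ Fintype.card X)
    (i : ℕ) (hi : i + 1 < k) (l : ℕ) (hlpos : 0 < l)
    (hl1 : L ⟨i, by omega⟩ = l) (hl2 : L ⟨i + 1, hi⟩ = l)
    (a : Fin k → X) (hfam : S.IsLambdaFamily L a) :
    S.IsLambdaWord L
      ((List.ofFn fun t : Fin k =>
          if (t : ℕ) = i then
            S.PsiNeg l (S.sigmaWord (S.Psi l (a ⟨i, by omega⟩)) (S.D^[l - 1] (a ⟨i + 1, hi⟩)))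
          else if (t : ℕ) = i + 1 then
            S.Psi l (S.tauWord (S.Psi l (a ⟨i + 1, hi⟩)) (a ⟨i, by omega⟩))
          else S.Psi (L t) (a t)).flatten) ∧
    ((List.ofFn fun t : Fin k =>
        if (t : ℕ) = i then
          S.PsiNeg l (S.sigmaWord (S.Psi l (a ⟨i, by omega⟩)) (S.D^[l - 1] (a ⟨i + 1, hi⟩)))
        else if (t : ℕ) = i + 1 then
          S.Psi l (S.tauWord (S.Psi l (a ⟨i + 1, hi⟩)) (a ⟨i, by omega⟩))
        else S.Psi (L t) (a t)).flatten) ∈ S.Orb (S.word L a) := by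
  obtain ⟨m, rfl⟩ : ∃ m, l = m + 1 := ⟨l - 1, by omega⟩
  simp only [Nat.add_sub_cancel]
  have hik : i < k := by omega
  obtain ⟨hfam', horb⟩ := S.main_aux L i hi hik m hl1 hl2 a
    (fun t => if (t : ℕ) = i
        then S.Dinv^[m] (S.sigmaWord (S.Psi (m+1) (a ⟨i, hik⟩)) (S.D^[m] (a ⟨i+1, hi⟩)))
        else if (t : ℕ) = i + 1
        then S.tauWord (S.Psi (m+1) (a ⟨i+1, hi⟩)) (a ⟨i, hik⟩)
        else a t)
    hfam (fun t => rfl)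
  have hx' : ((List.ofFn fun t : Fin k =>
        if (t : ℕ) = i then
          S.PsiNeg (m+1) (S.sigmaWord (S.Psi (m+1) (a ⟨i, hik⟩)) (S.D^[m] (a ⟨i+1, hi⟩)))
        else if (t : ℕ) = i + 1 then
          S.Psi (m+1) (S.tauWord (S.Psi (m+1) (a ⟨i+1, hi⟩)) (a ⟨i, hik⟩))
        else S.Psi (L t) (a t)).flatten)
      = S.word L (fun t => if (t : ℕ) = i
        then S.Dinv^[m] (S.sigmaWord (S.Psi (m+1) (a ⟨i, hik⟩)) (S.D^[m] (a ⟨i+1, hi⟩)))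
        else if (t : ℕ) = i + 1
        then S.tauWord (S.Psi (m+1) (a ⟨i+1, hi⟩)) (a ⟨i, hik⟩)
        else a t) := by
    unfold NDIS.word
    congr 1
    apply congrArg
    funext t
    by_cases h1 : (t : ℕ) = i
    · have ht : t = ⟨i, hik⟩ := Fin.ext h1
      subst ht
      simp [hl1, S.PsiNeg_eq_Psi]
    · by_cases h2 : (t : ℕ) = i + 1
      · have ht : t = ⟨i+1, hi⟩ := Fin.ext h2
        subst ht
        simp [h1, hl2]
      · simp [h1, h2]
  constructor
  · exact ⟨_, hx', hfam'⟩
  · show Relation.EqvGen S.Step (S.word L a) _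
    rw [hx']
    exact horb
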